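/- Let F be a finite field with q = |F| elements and K a finite field extension of F. Let f ∈ K[X] be a nonzero linearized polynomial all of whose coefficients lie in the image of F in K, and let g, Q, R ∈ K[X] be linearized polynomials with g = Q ∘ f + R and deg R < deg f (so R is the right remainder of g by f). Then every coefficient of R lies in the F-span of the coefficients of g; that is, supp(R) ⊆ supp(g). -/
import Mathlib


open Polynomial

/-- A polynomial over `K` is linearized (a `q`-polynomial) if every exponent in
its support is a power of `q`. -/
def IsLinearized (q : ℕ) {K : Type*} [Semiring K] (p : K[X]) : Prop :=
  ∀ n ∈ p.support, ∃ i : ℕ, n = q ^ i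

/-- If `f` is a nonzero linearized polynomial with coefficients in the base
field `F`, then the right remainder `R` of a linearized polynomial `g` under
right division by `f` satisfies `supp(R) ⊆ supp(g)`. -/
theorem supp_right_remainder_subset (F K : Type*) [Field F] [Fintype F]
    [Field K] [Fintype K] [Algebra F K]
    (q : ℕ) (hq : q = Fintype.card F)
    (f g Q R : K[X])
    (hf : IsLinearized q f) (hf0 : f ≠ 0)
    (hfF : ∀ n, f.coeff n ∈ Set.range (algebraMap F K))
    (hg : IsLinearized q g) (hQ : IsLinearized q Q) (hR : IsLinearized q R)
    (hdiv : g = Q.comp f + R) (hdeg : R.degree < f.degree) :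
    ∀ n, R.coeff n ∈ Submodule.span F (Set.range g.coeff) := by
  intro n
  set V := Submodule.span F (Set.range g.coeff) with hV
  have hq2 : 1 < q := by rw [hq]; exact Fintype.one_lt_card
  -- linearized polynomials have zero constant coefficient
  have hcoeff0 : ∀ p : K[X], IsLinearized q p → p.coeff 0 = 0 := by
    intro p hp
    by_contra h
    obtain ⟨i, hi⟩ := hp 0 (mem_support_iff.mpr h)
    have hpos : 0 < q ^ i := pow_pos (by omega) i
    exact hpos.ne' hi.symm
  have hf0c : f.coeff 0 = 0 := hcoeff0 f hf
  have hd1 : 1 ≤ f.natDegree := by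
    rcases Nat.eq_zero_or_pos f.natDegree with h0 | h1
    · exfalso
      apply hf0
      have := f.eq_C_of_natDegree_eq_zero h0
      rw [hf0c] at this
      simpa using this
    · exact h1
  set d := f.natDegree with hd
  -- coefficients of powers of f are in the image of F
  have hfpow : ∀ e m, (f ^ e).coeff m ∈ Set.range (algebraMap F K) := by
    intro e m
    have hfl : f ∈ Polynomial.lifts (algebraMap F K : F →+* K) :=
      (Polynomial.lifts_iff_coeff_lifts f).mpr hfF
    exact (Polynomial.lifts_iff_coeff_lifts _).mp (pow_mem hfl e) m
  have hmulV : ∀ x ∈ Set.range (algebraMap F K), ∀ v ∈ V, x * v ∈ V := by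
    rintro x ⟨b, rfl⟩ v hv
    rw [← Algebra.smul_def]
    exact Submodule.smul_mem V b hv
  have hgV : ∀ m, g.coeff m ∈ V := fun m => Submodule.subset_span ⟨m, rfl⟩
  have hcomp : ∀ m, (Q.comp f).coeff m = ∑ e ∈ Q.support, Q.coeff e * (f ^ e).coeff m := by
    intro m
    rw [Polynomial.comp, Polynomial.eval₂_eq_sum, Polynomial.sum_def,
      Polynomial.finset_sum_coeff]
    simp only [coeff_C_mul]
  have hc0 : f.leadingCoeff ≠ 0 := leadingCoeff_ne_zero.mpr hf0
  obtain ⟨b, hb⟩ := hfF d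
  have hb' : algebraMap F K b = f.leadingCoeff := hb
  have hb0 : b ≠ 0 := by
    rintro rfl
    rw [map_zero] at hb'
    exact hc0 hb'.symm
  -- all coefficients of Q are in V
  have hQV : ∀ k j, Q.natDegree < j + k → Q.coeff j ∈ V := by
    intro k
    induction k with
    | zero =>
      intro j hj
      rw [coeff_eq_zero_of_natDegree_lt (by omega)]
      exact V.zero_mem
    | succ k ih =>
      intro j hj
      by_cases hjz : Q.coeff j = 0
      · rw [hjz]; exact V.zero_mem
      rcases Nat.eq_zero_or_pos j with hj0 | hj1
      · exfalso; exact hjz (by rw [hj0]; exact hcoeff0 Q hQ)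
      have hjs : j ∈ Q.support := mem_support_iff.mpr hjz
      have hRz : R.coeff (j * d) = 0 := by
        apply coeff_eq_zero_of_degree_lt
        calc R.degree < f.degree := hdeg
          _ ≤ ((j * d : ℕ) : WithBot ℕ) := by
              rw [degree_eq_natDegree hf0]
              exact_mod_cast Nat.le_mul_of_pos_left d hj1
      have hgeq : g.coeff (j * d) =
          Q.coeff j * (f ^ j).coeff (j * d) +
            ∑ e ∈ Q.support.erase j, Q.coeff e * (f ^ e).coeff (j * d) := by
        rw [hdiv, coeff_add, hRz, add_zero, hcomp, ← Finset.add_sum_erase _ _ hjs]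
      have hcj : (f ^ j).coeff (j * d) = f.leadingCoeff ^ j :=
        coeff_pow_mul_natDegree f j
      have hsum : ∑ e ∈ Q.support.erase j, Q.coeff e * (f ^ e).coeff (j * d) ∈ V := by
        apply Submodule.sum_mem
        intro e he
        rcases lt_or_gt_of_ne (Finset.ne_of_mem_erase he) with hlt | hgt
        · have hz : (f ^ e).coeff (j * d) = 0 := by
            apply coeff_eq_zero_of_natDegree_lt
            rw [natDegree_pow]
            have hd0 : 0 < d := hd1
            nlinarith
          rw [hz, mul_zero]
          exact V.zero_mem
        · have hQe : Q.coeff e ∈ V := ih e (by omega)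
          rw [mul_comm]
          exact hmulV _ (hfpow e _) _ hQe
      have hkey : Q.coeff j * f.leadingCoeff ^ j =
          g.coeff (j * d) - ∑ e ∈ Q.support.erase j, Q.coeff e * (f ^ e).coeff (j * d) := by
        rw [hgeq, hcj]; ring
      have hmem : Q.coeff j * f.leadingCoeff ^ j ∈ V := by
        rw [hkey]
        exact Submodule.sub_mem V (hgV _) hsum
      have heq : Q.coeff j = algebraMap F K ((b ^ j)⁻¹) * (Q.coeff j * f.leadingCoeff ^ j) := by
        rw [map_inv₀, map_pow, hb']
        field_simp
      rw [heq]
      exact hmulV _ ⟨_, rfl⟩ _ hmem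
  have hQ' : ∀ e, Q.coeff e ∈ V := fun e => hQV (Q.natDegree + 1) e (by omega)
  have hRn : R.coeff n = g.coeff n - (Q.comp f).coeff n := by
    rw [hdiv, coeff_add]; ring
  rw [hRn]
  apply Submodule.sub_mem _ (hgV n)
  rw [hcomp]
  apply Submodule.sum_mem
  intro e _
  rw [mul_comm]
  exact hmulV _ (hfpow e n) _ (hQ' e)
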